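/- Let A = {a₁,a₂,a₃} and B = {b₁,b₂,b₃} be the alternating vertices of a regular hexagon inscribed in the unit circle centered at the origin o, i.e., a₁=(1,0), a₂=(−1/2,√3/2), a₃=(−1/2,−√3/2), bᵢ=−aᵢ. Then every directed network in the Euclidean plane containing a directed path from each aᵢ to each bⱼ has total Euclidean length at least 6; in particular, the star network with edges aᵢ→o and o→bᵢ (i=1,2,3) is a shortest (A,B)-network. -/

import Mathlib

/-- There is a directed path from `a` to `b` using the directed edges in `E`. -/
def HasDirPath (E : Finset ((ℝ × ℝ) × (ℝ × ℝ))) (a b : ℝ × ℝ) : Prop :=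
  Relation.ReflTransGen (fun x y => (x, y) ∈ E) a b

/-- The Euclidean length of a straight segment in `ℝ²`. -/
noncomputable def euclLen (e : (ℝ × ℝ) × (ℝ × ℝ)) : ℝ :=
  Real.sqrt ((e.1.1 - e.2.1) ^ 2 + (e.1.2 - e.2.2) ^ 2)

lemma reach_erase {α : Type*} (r : α → α → Prop) (u v : α) {a b : α}
    (h : Relation.ReflTransGen r a b) :
    Relation.ReflTransGen (fun x y => r x y ∧ (x, y) ≠ (u, v)) a b ∨
      Relation.ReflTransGen (fun x y => r x y ∧ (x, y) ≠ (u, v)) v b := by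
  induction h using Relation.ReflTransGen.head_induction_on with
  | refl => exact Or.inl .refl
  | head hxy htail ih =>
    rename_i x y
    rcases ih with ih | ih
    · by_cases he : (x, y) = (u, v)
      · rcases Prod.mk.injEq .. ▸ he with ⟨rfl, rfl⟩
        exact Or.inr ih
      · exact Or.inl (ih.head ⟨hxy, he⟩)
    · exact Or.inr ih

lemma exists_good_subset {α : Type*} [DecidableEq α] :
    ∀ (E : Finset (α × α)) (a b : α),
      Relation.ReflTransGen (fun x y => (x, y) ∈ E) a b →
      ∃ S, S ⊆ E ∧ ∀ f : α → ℝ, f a - f b ≤ ∑ e ∈ S, (f e.1 - f e.2) := by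
  intro E
  induction E using Finset.strongInduction with
  | _ E ih =>
    intro a b h
    rcases Relation.ReflTransGen.cases_head h with rfl | ⟨c, hac, hcb⟩
    · exact ⟨∅, Finset.empty_subset _, fun f => by simp⟩
    · have h2 : Relation.ReflTransGen (fun x y => (x, y) ∈ E.erase (a, c)) c b := by
        rcases reach_erase (fun x y => (x, y) ∈ E) a c hcb with h' | h' <;>
          exact Relation.ReflTransGen.mono (fun x y (hm : (x, y) ∈ E ∧ (x, y) ≠ (a, c)) => Finset.mem_erase.mpr ⟨hm.2, hm.1⟩) _ _ h'
      obtain ⟨S', hS'sub, hS'⟩ := ih _ (Finset.erase_ssubset hac) c b h2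
      refine ⟨insert (a, c) S',
        Finset.insert_subset hac (hS'sub.trans (Finset.erase_subset _ _)), fun f => ?_⟩
      have hnot : (a, c) ∉ S' := fun hm => (Finset.mem_erase.mp (hS'sub hm)).1 rfl
      rw [Finset.sum_insert hnot]
      have := hS' f
      linarith

lemma inner_le_norm' (v1 v2 s1 s2 : ℝ) (hs : s1 ^ 2 + s2 ^ 2 ≤ 1) :
    v1 * s1 + v2 * s2 ≤ Real.sqrt (v1 ^ 2 + v2 ^ 2) := by
  have h0 : (0 : ℝ) ≤ v1 ^ 2 + v2 ^ 2 := by positivity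
  have hL0 := Real.sqrt_nonneg (v1 ^ 2 + v2 ^ 2)
  rcases le_or_gt (v1 * s1 + v2 * s2) 0 with h | h
  · linarith
  · rw [← Real.sqrt_sq h.le]
    apply Real.sqrt_le_sqrt
    nlinarith [sq_nonneg (v1 * s2 - v2 * s1), sq_nonneg (v1 * s1 + v2 * s2)]

/-- Linear functional `p ↦ ⟨p, u⟩`. -/
noncomputable def dirF (u : ℝ × ℝ) (p : ℝ × ℝ) : ℝ := p.1 * u.1 + p.2 * u.2

lemma edge_bound (v1 v2 c1 c2 X : ℝ) (hX : X = v1 * c1 + v2 * c2)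
    (hc : c1 ^ 2 + c2 ^ 2 ≤ 1) : X ≤ Real.sqrt (v1 ^ 2 + v2 ^ 2) :=
  hX ▸ inner_le_norm' v1 v2 c1 c2 hc

theorem hexagon_star_shortest
    (a₁ a₂ a₃ b₁ b₂ b₃ : ℝ × ℝ)
    (ha₁ : a₁ = (1, 0)) (ha₂ : a₂ = (-(1 / 2), Real.sqrt 3 / 2))
    (ha₃ : a₃ = (-(1 / 2), -(Real.sqrt 3 / 2)))
    (hb₁ : b₁ = -a₁) (hb₂ : b₂ = -a₂) (hb₃ : b₃ = -a₃) :
    (∀ E : Finset ((ℝ × ℝ) × (ℝ × ℝ)),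
        (∀ a ∈ ({a₁, a₂, a₃} : Set (ℝ × ℝ)), ∀ b ∈ ({b₁, b₂, b₃} : Set (ℝ × ℝ)),
          HasDirPath E a b) →
        6 ≤ ∑ e ∈ E, euclLen e) ∧
    (∀ a ∈ ({a₁, a₂, a₃} : Set (ℝ × ℝ)), ∀ b ∈ ({b₁, b₂, b₃} : Set (ℝ × ℝ)),
      HasDirPath ({(a₁, 0), (a₂, 0), (a₃, 0), (0, b₁), (0, b₂), (0, b₃)} :
          Finset ((ℝ × ℝ) × (ℝ × ℝ))) a b) ∧
    (∑ e ∈ ({(a₁, 0), (a₂, 0), (a₃, 0), (0, b₁), (0, b₂), (0, b₃)} :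
        Finset ((ℝ × ℝ) × (ℝ × ℝ))), euclLen e) = 6 := by
  have hs2 : Real.sqrt 3 ^ 2 = 3 := Real.sq_sqrt (by norm_num)
  have hs0 : (0 : ℝ) < Real.sqrt 3 := Real.sqrt_pos.mpr (by norm_num)
  subst hb₁ hb₂ hb₃ ha₁ ha₂ ha₃
  refine ⟨?_, ?_, ?_⟩
  · -- lower bound
    intro E hE
    obtain ⟨S1, hS1, hf1⟩ := exists_good_subset E ((1:ℝ), (0:ℝ)) (-((1:ℝ), (0:ℝ)))
      (hE _ (by simp) _ (by simp))
    obtain ⟨S2, hS2, hf2⟩ := exists_good_subset E (-(1/2), Real.sqrt 3 / 2)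
      (-(-(1/2), Real.sqrt 3 / 2)) (hE _ (by simp) _ (by simp))
    obtain ⟨S3, hS3, hf3⟩ := exists_good_subset E (-(1/2), -(Real.sqrt 3 / 2))
      (-(-(1/2), -(Real.sqrt 3 / 2))) (hE _ (by simp) _ (by simp))
    set u1 : ℝ × ℝ := (1, 0) with hu1
    set u2 : ℝ × ℝ := (-(1/2), Real.sqrt 3 / 2) with hu2
    set u3 : ℝ × ℝ := (-(1/2), -(Real.sqrt 3 / 2)) with hu3
    have key1 : (2 : ℝ) ≤ ∑ e ∈ S1, (dirF u1 e.1 - dirF u1 e.2) := by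
      have h := hf1 (dirF u1)
      have e1 : dirF u1 ((1:ℝ), (0:ℝ)) - dirF u1 (-((1:ℝ), (0:ℝ))) = 2 := by
        norm_num [dirF, hu1]
      linarith
    have key2 : (2 : ℝ) ≤ ∑ e ∈ S2, (dirF u2 e.1 - dirF u2 e.2) := by
      have h := hf2 (dirF u2)
      have e1 : dirF u2 (-(1/2), Real.sqrt 3 / 2) - dirF u2 (-(-(1/2), Real.sqrt 3 / 2)) = 2 := by
        simp only [dirF, hu2, Prod.fst_neg, Prod.snd_neg]
        nlinarith [hs2]
      linarith
    have key3 : (2 : ℝ) ≤ ∑ e ∈ S3, (dirF u3 e.1 - dirF u3 e.2) := by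
      have h := hf3 (dirF u3)
      have e1 : dirF u3 (-(1/2), -(Real.sqrt 3 / 2)) - dirF u3 (-(-(1/2), -(Real.sqrt 3 / 2))) = 2 := by
        simp only [dirF, hu3, Prod.fst_neg, Prod.snd_neg]
        nlinarith [hs2]
      linarith
    classical
    have perEdge : ∀ e ∈ E,
        (if e ∈ S1 then dirF u1 e.1 - dirF u1 e.2 else 0) +
        (if e ∈ S2 then dirF u2 e.1 - dirF u2 e.2 else 0) +
        (if e ∈ S3 then dirF u3 e.1 - dirF u3 e.2 else 0) ≤ euclLen e := by
      intro e _
      rw [euclLen]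
      split_ifs with h1 h2 h3 h4 h5 h6 h7 <;>
        simp only [dirF, hu1, hu2, hu3, add_zero, zero_add] <;>
        [ exact edge_bound _ _ 0 0 _ (by ring) (by norm_num);
          exact edge_bound _ _ (1/2) (Real.sqrt 3 / 2) _ (by ring) (by nlinarith [hs2]);
          exact edge_bound _ _ (1/2) (-(Real.sqrt 3 / 2)) _ (by ring) (by nlinarith [hs2]);
          exact edge_bound _ _ 1 0 _ (by ring) (by norm_num);
          exact edge_bound _ _ (-1) 0 _ (by ring) (by norm_num);
          exact edge_bound _ _ (-(1/2)) (Real.sqrt 3 / 2) _ (by ring) (by nlinarith [hs2]);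
          exact edge_bound _ _ (-(1/2)) (-(Real.sqrt 3 / 2)) _ (by ring) (by nlinarith [hs2]);
          exact Real.sqrt_nonneg _]
    have hsum : ∑ e ∈ E,
        ((if e ∈ S1 then dirF u1 e.1 - dirF u1 e.2 else 0) +
         (if e ∈ S2 then dirF u2 e.1 - dirF u2 e.2 else 0) +
         (if e ∈ S3 then dirF u3 e.1 - dirF u3 e.2 else 0)) ≤ ∑ e ∈ E, euclLen e :=
      Finset.sum_le_sum perEdge
    have split1 : ∑ e ∈ E, (if e ∈ S1 then dirF u1 e.1 - dirF u1 e.2 else 0)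
        = ∑ e ∈ S1, (dirF u1 e.1 - dirF u1 e.2) := by
      rw [Finset.sum_ite_mem, Finset.inter_eq_right.mpr hS1]
    have split2 : ∑ e ∈ E, (if e ∈ S2 then dirF u2 e.1 - dirF u2 e.2 else 0)
        = ∑ e ∈ S2, (dirF u2 e.1 - dirF u2 e.2) := by
      rw [Finset.sum_ite_mem, Finset.inter_eq_right.mpr hS2]
    have split3 : ∑ e ∈ E, (if e ∈ S3 then dirF u3 e.1 - dirF u3 e.2 else 0)
        = ∑ e ∈ S3, (dirF u3 e.1 - dirF u3 e.2) := by
      rw [Finset.sum_ite_mem, Finset.inter_eq_right.mpr hS3]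
    rw [Finset.sum_add_distrib, Finset.sum_add_distrib, split1, split2, split3] at hsum
    linarith
  · -- the star network is an (A,B)-network
    intro a ha b hb
    simp only [Set.mem_insert_iff, Set.mem_singleton_iff] at ha hb
    refine Relation.ReflTransGen.head (b := 0) ?_ (Relation.ReflTransGen.single ?_)
    · rcases ha with rfl | rfl | rfl <;> simp
    · rcases hb with rfl | rfl | rfl <;> simp
  · -- the star network has length 6
    classical
    have keyA : ∀ x y : ℝ, x ^ 2 + y ^ 2 = 1 → euclLen ((x, y), (0 : ℝ × ℝ)) = 1 := by
      intro x y h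
      simp only [euclLen, Prod.fst_zero, Prod.snd_zero, sub_zero]
      rw [h, Real.sqrt_one]
    have keyB : ∀ x y : ℝ, x ^ 2 + y ^ 2 = 1 → euclLen ((0 : ℝ × ℝ), (x, y)) = 1 := by
      intro x y h
      simp only [euclLen, Prod.fst_zero, Prod.snd_zero, zero_sub, neg_sq]
      rw [h, Real.sqrt_one]
    have h3 : ¬ (Real.sqrt 3 / 2 = -(Real.sqrt 3 / 2)) := by intro h; nlinarith
    have h3' : ¬ (-(Real.sqrt 3 / 2) = Real.sqrt 3 / 2) := by intro h; nlinarith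
    simp only [Prod.neg_mk, neg_neg, neg_zero]
    rw [Finset.sum_insert (by norm_num [Prod.ext_iff]),
        Finset.sum_insert (by norm_num [Prod.ext_iff, h3, h3']),
        Finset.sum_insert (by norm_num [Prod.ext_iff]),
        Finset.sum_insert (by norm_num [Prod.ext_iff]),
        Finset.sum_insert (by norm_num [Prod.ext_iff, h3, h3']),
        Finset.sum_singleton]
    rw [keyA 1 0 (by norm_num), keyA _ _ (by nlinarith [hs2]), keyA _ _ (by nlinarith [hs2]),
        keyB _ _ (by norm_num), keyB _ _ (by nlinarith [hs2]), keyB _ _ (by nlinarith [hs2])]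
    norm_num
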